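/- Let G be a topological group and let K ≤ H ≤ G be closed subgroups such that K is cocompact in H (the coset space H/K is compact) and K is codistal in G, and assume G has a compact open subgroup. Then H is codistal in G. -/

import Mathlib

open Topology

open Filter Pointwise in
private lemma ultra_of_mem_closure_range {α β : Type*} [Nonempty α] [TopologicalSpace β]
    (f : α → β) (c : β) (h : c ∈ closure (Set.range f)) :
    ∃ 𝒰 : Ultrafilter α, Filter.Tendsto f 𝒰 (𝓝 c) := by
  classical
  obtain ⟨𝒱, hmem, hle⟩ := mem_closure_iff_ultrafilter.mp h
  set σ : β → α := fun b => if hb : ∃ a, f a = b then hb.choose else Classical.arbitrary α with hσ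
  refine ⟨𝒱.map σ, ?_⟩
  have hev : ∀ᶠ b in (𝒱 : Filter β), f (σ b) = b := by
    refine Filter.mem_of_superset hmem ?_
    rintro b ⟨a, rfl⟩
    have hb : ∃ a', f a' = f a := ⟨a, rfl⟩
    show f (σ (f a)) = f a
    simp only [hσ, dif_pos hb]
    exact hb.choose_spec
  have hid : Filter.Tendsto (fun b : β => b) 𝒱 (𝓝 c) := by
    exact Filter.tendsto_id'.mpr hle
  have h2 : Filter.Tendsto (fun b => f (σ b)) 𝒱 (𝓝 c) := (Filter.tendsto_congr' hev).mpr hid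
  rw [Ultrafilter.coe_map]
  rwa [Filter.tendsto_map'_iff]

private lemma bind_neBot_aux {α : Type*} (𝒜 : Filter α) [h𝒜 : 𝒜.NeBot] (m : α → Filter α)
    (hm : ∀ i, (m i).NeBot) : (𝒜.bind m).NeBot := by
  refine ⟨fun h => ?_⟩
  have hemp : ∅ ∈ 𝒜.bind m := by rw [h]; exact Filter.mem_bot
  rw [Filter.mem_bind'] at hemp
  obtain ⟨i, hi⟩ := (Filter.Eventually.exists (p := fun a => ∅ ∈ m a) hemp)
  exact (hm i).ne (Filter.empty_mem_iff_bot.mp hi)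

open Filter in
private lemma tendsto_bind_aux {α X : Type*} [Mul α] [TopologicalSpace X]
    (𝒜 ℬ : Filter α) (g ℓ : α → X) (c : X)
    (h1 : ∀ i, Filter.Tendsto (fun j => g (i * j)) ℬ (𝓝 (ℓ i)))
    (h2 : Filter.Tendsto ℓ 𝒜 (𝓝 c)) :
    Filter.Tendsto g (𝒜.bind fun i => ℬ.map (fun j => i * j)) (𝓝 c) := by
  rw [tendsto_nhds]
  intro s hso hsc
  have : ∀ᶠ x in 𝒜.bind (fun i => ℬ.map (fun j => i * j)), g x ∈ s := by
    rw [Filter.eventually_bind]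
    filter_upwards [(tendsto_nhds.mp h2) s hso hsc] with i hi
    rw [Filter.eventually_map]
    exact (h1 i) (hso.mem_nhds hi)
  exact this

section GroupAux

open Filter Pointwise

set_option linter.unusedSectionVars false

variable {G : Type*} [Group G] [TopologicalSpace G] [IsTopologicalGroup G]

private lemma smul_mk_aux (K : Subgroup G) (g v : G) :
    g • (QuotientGroup.mk v : G ⧸ K) = QuotientGroup.mk (g * v) := by
  rw [MulAction.Quotient.smul_mk]
  rfl

private lemma t2_coset_aux (K : Subgroup G) (hKc : IsClosed (K : Set G)) :
    T2Space (G ⧸ K) := by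
  refine ⟨fun q₁ q₂ hne => ?_⟩
  induction q₁ using QuotientGroup.induction_on with | H a =>
  induction q₂ using QuotientGroup.induction_on with | H b =>
  have hab : a⁻¹ * b ∉ K := fun hmem => hne (QuotientGroup.eq.mpr hmem)
  set C : Set G := (fun g => a * g * b⁻¹) '' (K : Set G) with hC
  have hCc : IsClosed C := by
    have heq : (fun g => a * g * b⁻¹) = (Homeomorph.mulRight b⁻¹) ∘ (Homeomorph.mulLeft a) := rfl
    rw [hC, heq, Set.image_comp]
    exact ((Homeomorph.mulRight b⁻¹).isClosedMap _ ((Homeomorph.mulLeft a).isClosedMap _ hKc))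
  have h1C : (1 : G) ∉ C := by
    rintro ⟨k, hk, hk1⟩
    apply hab
    have hbeta : a * k * b⁻¹ = 1 := hk1
    have hkval : k = a⁻¹ * b := by
      calc k = a⁻¹ * (a * k * b⁻¹) * b := by group
      _ = a⁻¹ * 1 * b := by rw [hbeta]
      _ = a⁻¹ * b := by group
    rwa [hkval] at hk
  have hCo : Cᶜ ∈ 𝓝 (1 : G) := hCc.isOpen_compl.mem_nhds h1C
  have hcont : Filter.Tendsto (fun p : G × G => p.1⁻¹ * p.2) (𝓝 ((1 : G), (1 : G)))
      (𝓝 (1 : G)) := by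
    exact ((continuous_fst.inv.mul continuous_snd).tendsto ((1 : G), (1 : G))).trans (by simp)
  have hpre := Filter.mem_map.mp (hcont hCo)
  rw [nhds_prod_eq] at hpre
  obtain ⟨N₁, hN₁, N₂, hN₂, hsub⟩ := Filter.mem_prod_iff.mp hpre
  obtain ⟨V, hVsub, hVo, hV1⟩ := mem_nhds_iff.mp (Filter.inter_mem hN₁ hN₂)
  refine ⟨QuotientGroup.mk '' (V * {a}), QuotientGroup.mk '' (V * {b}),
    QuotientGroup.isOpenMap_coe _ (hVo.mul_right), QuotientGroup.isOpenMap_coe _ (hVo.mul_right),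
    ⟨a, ⟨1, hV1, a, rfl, one_mul a⟩, rfl⟩, ⟨b, ⟨1, hV1, b, rfl, one_mul b⟩, rfl⟩, ?_⟩
  rw [Set.disjoint_left]
  rintro q ⟨g₁, ⟨v₁, hv₁, a', ha', hg₁⟩, hq₁⟩ ⟨g₂, ⟨v₂, hv₂, b', hb', hg₂⟩, hq₂⟩
  rw [Set.mem_singleton_iff] at ha' hb'
  rw [ha'] at hg₁
  rw [hb'] at hg₂
  subst hg₁ hg₂
  rw [← hq₂] at hq₁
  have hK := QuotientGroup.eq.mp hq₁
  have hmem : v₁⁻¹ * v₂ ∈ Cᶜ :=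
    hsub (Set.mk_mem_prod (hVsub hv₁).1 (hVsub hv₂).2)
  exact hmem ⟨(v₁ * a)⁻¹ * (v₂ * b), hK, by group⟩

private lemma mem_of_mk_mem_mul_image (K : Subgroup G) (s : Set G) {g : G}
    (h : (QuotientGroup.mk g : G ⧸ K) ∈ QuotientGroup.mk '' (s * (K : Set G))) :
    g ∈ s * (K : Set G) := by
  obtain ⟨t, ⟨v, hv, k, hk, rfl⟩, he⟩ := h
  have hmem : (v * k)⁻¹ * g ∈ K := QuotientGroup.eq.mp he
  refine ⟨v, hv, k * ((v * k)⁻¹ * g), mul_mem hk hmem, by group⟩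

end GroupAux

/-- A subgroup `K` of a topological group `G` is codistal if the left translation action of
`G` on `G/K` is distal: no pair of distinct cosets is proximal. -/
def Codistal {G : Type*} [Group G] [TopologicalSpace G] (K : Subgroup G) : Prop :=
  ∀ x y : G, (QuotientGroup.mk x : G ⧸ K) ≠ QuotientGroup.mk y →
    ¬ ∃ z : G ⧸ K, (z, z) ∈ closure {p : (G ⧸ K) × (G ⧸ K) |
      ∃ g : G, p = (QuotientGroup.mk (g * x), QuotientGroup.mk (g * y))}

section MoreAux

open Filter Pointwise

set_option linter.unusedSectionVars false

variable {G : Type*} [Group G] [TopologicalSpace G] [IsTopologicalGroup G]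

private lemma dist_aux (K : Subgroup G) (hKd : Codistal K) {a b : G}
    (hab : (QuotientGroup.mk a : G ⧸ K) ≠ QuotientGroup.mk b)
    {ι : Type*} (ℱ : Filter ι) [ℱ.NeBot] (f : ι → G) (c : G ⧸ K)
    (ha : Filter.Tendsto (fun i => (QuotientGroup.mk (f i * a) : G ⧸ K)) ℱ (𝓝 c))
    (hb : Filter.Tendsto (fun i => (QuotientGroup.mk (f i * b) : G ⧸ K)) ℱ (𝓝 c)) : False := by
  refine hKd a b hab ⟨c, ?_⟩
  have hT : Filter.Tendsto
      (fun i => ((QuotientGroup.mk (f i * a), QuotientGroup.mk (f i * b)) :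
        (G ⧸ K) × (G ⧸ K))) ℱ (𝓝 (c, c)) := ha.prodMk_nhds hb
  exact mem_closure_of_tendsto hT (Filter.Eventually.of_forall fun i => ⟨f i, rfl⟩)

private lemma keylim (U : Subgroup G) (hUo : IsOpen (U : Set G)) (hUc : IsCompact (U : Set G))
    (K H : Subgroup G) (hKH : K ≤ H)
    (hT2P : T2Space (G ⧸ H))
    (hYcomp : IsCompact (QuotientGroup.mk '' (H : Set G) : Set (G ⧸ K)))
    (𝒢 : Ultrafilter G) (f : G → G)
    (hA : Filter.Tendsto (fun g => (QuotientGroup.mk (f g) : G ⧸ H)) 𝒢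
      (𝓝 (QuotientGroup.mk 1))) :
    ∃ a ∈ H, Filter.Tendsto (fun g => (QuotientGroup.mk (f g) : G ⧸ K)) 𝒢
      (𝓝 (QuotientGroup.mk a)) := by
  classical
  haveI := hT2P
  have hUH : IsOpen ((U : Set G) * (H : Set G)) := hUo.mul_right
  have hopen : IsOpen (QuotientGroup.mk '' ((U : Set G) * (H : Set G)) : Set (G ⧸ H)) :=
    QuotientGroup.isOpenMap_coe _ hUH
  have hmem1 : (QuotientGroup.mk 1 : G ⧸ H) ∈ QuotientGroup.mk '' ((U : Set G) * (H : Set G)) :=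
    ⟨1, ⟨1, U.one_mem, 1, H.one_mem, mul_one 1⟩, rfl⟩
  have hev : ∀ᶠ g in (𝒢 : Filter G), f g ∈ (U : Set G) * (H : Set G) := by
    have h1 := Filter.mem_map.mp (hA (hopen.mem_nhds hmem1))
    filter_upwards [h1] with g hg
    exact mem_of_mk_mem_mul_image H (U : Set G) hg
  have hdec : ∀ g : G, ∃ uh : G × G,
      f g ∈ (U : Set G) * (H : Set G) →
        uh.1 ∈ (U : Set G) ∧ uh.2 ∈ (H : Set G) ∧ uh.1 * uh.2 = f g := by
    intro g
    by_cases hg : f g ∈ (U : Set G) * (H : Set G)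
    · obtain ⟨u, hu, h, hh, e⟩ := hg
      exact ⟨(u, h), fun _ => ⟨hu, hh, e⟩⟩
    · exact ⟨(1, 1), fun hc => absurd hc hg⟩
  choose uh huh using hdec
  have hu_ev : ∀ᶠ g in (𝒢 : Filter G), (uh g).1 ∈ (U : Set G) := by
    filter_upwards [hev] with g hg; exact (huh g hg).1
  have hh_ev : ∀ᶠ g in (𝒢 : Filter G),
      (QuotientGroup.mk ((uh g).2) : G ⧸ K) ∈ QuotientGroup.mk '' (H : Set G) := by
    filter_upwards [hev] with g hg; exact ⟨(uh g).2, (huh g hg).2.1, rfl⟩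
  obtain ⟨u₀, hu₀U, hu₀le⟩ := hUc.ultrafilter_le_nhds (𝒢.map fun g => (uh g).1)
    (by rw [Ultrafilter.coe_map, Filter.le_principal_iff, Filter.mem_map]; exact hu_ev)
  obtain ⟨η, hηY, hηle⟩ := hYcomp.ultrafilter_le_nhds
    (𝒢.map fun g => (QuotientGroup.mk ((uh g).2) : G ⧸ K))
    (by rw [Ultrafilter.coe_map, Filter.le_principal_iff, Filter.mem_map]; exact hh_ev)
  rw [Ultrafilter.coe_map] at hu₀le hηle
  rw [← Filter.tendsto_id'] at hu₀le hηle
  rw [Filter.tendsto_map'_iff] at hu₀le hηle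
  have hQ : Filter.Tendsto (fun g => (uh g).1 • (QuotientGroup.mk ((uh g).2) : G ⧸ K)) 𝒢
      (𝓝 (u₀ • η)) := Filter.Tendsto.smul hu₀le hηle
  have hcongr : ∀ᶠ g in (𝒢 : Filter G),
      (uh g).1 • (QuotientGroup.mk ((uh g).2) : G ⧸ K) = QuotientGroup.mk (f g) := by
    filter_upwards [hev] with g hg
    rw [smul_mk_aux K, (huh g hg).2.2]
  have hQ' : Filter.Tendsto (fun g => (QuotientGroup.mk (f g) : G ⧸ K)) 𝒢 (𝓝 (u₀ • η)) :=
    hQ.congr' hcongr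
  obtain ⟨h₀, hh₀, rfl⟩ := hηY
  let pr : G ⧸ K → G ⧸ H := Quotient.map' id fun a b hab => by
    rw [QuotientGroup.leftRel_apply] at hab ⊢
    exact hKH hab
  have hpr_mk : ∀ g : G, pr (QuotientGroup.mk g) = QuotientGroup.mk g := fun g => rfl
  have hpr_cont : Continuous pr := by
    rw [(QuotientGroup.isQuotientMap_mk K).continuous_iff]
    exact QuotientGroup.continuous_mk
  have hlim2 : Filter.Tendsto (fun g => (QuotientGroup.mk (f g) : G ⧸ H)) 𝒢
      (𝓝 (pr (u₀ • QuotientGroup.mk h₀))) := by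
    have := (hpr_cont.tendsto _).comp hQ'
    refine this.congr fun g => ?_
    exact hpr_mk (f g)
  have huniq : pr (u₀ • (QuotientGroup.mk h₀ : G ⧸ K)) = QuotientGroup.mk 1 :=
    tendsto_nhds_unique hlim2 hA
  rw [smul_mk_aux K, hpr_mk] at huniq
  have hmemH : u₀ * h₀ ∈ H := by
    have h2 := QuotientGroup.eq.mp huniq
    have h3 : h₀⁻¹ * u₀⁻¹ ∈ H := by simpa using h2
    have h4 : (h₀⁻¹ * u₀⁻¹)⁻¹ ∈ H := inv_mem h3
    simpa using h4
  refine ⟨u₀ * h₀, hmemH, ?_⟩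
  rw [← smul_mk_aux K]
  exact hQ'

end MoreAux

open Filter Pointwise

/-- Let `G` be a topological group with a compact open subgroup and let `K ≤ H ≤ G` be
closed subgroups such that `K` is cocompact in `H` and codistal in `G`.  Then `H` is
codistal in `G`. -/
theorem codistal_of_cocompact {G : Type*} [Group G] [TopologicalSpace G]
    [IsTopologicalGroup G]
    (hcompactopen : ∃ U : Subgroup G, IsOpen (U : Set G) ∧ IsCompact (U : Set G))
    (K H : Subgroup G) (hKH : K ≤ H)
    (hKc : IsClosed (K : Set G)) (hHc : IsClosed (H : Set G))
    (hcocompact : CompactSpace (H ⧸ K.subgroupOf H))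
    (hKd : Codistal K) : Codistal H := by
  classical
  obtain ⟨U, hUo, hUc⟩ := hcompactopen
  rintro x y hxy ⟨z, hz⟩
  haveI hT2Q : T2Space (G ⧸ K) := t2_coset_aux K hKc
  haveI hT2P : T2Space (G ⧸ H) := t2_coset_aux H hHc
  haveI : Nonempty G := ⟨1⟩
  haveI : Nonempty (↥K) := ⟨1⟩
  set w : G := x⁻¹ * y with hwdef
  have hw : w ∉ H := fun hmem => hxy (QuotientGroup.eq.mpr hmem)
  -- compactness of the image of `H` in `G ⧸ K`
  have hYcomp : IsCompact (QuotientGroup.mk '' (H : Set G) : Set (G ⧸ K)) := by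
    let φ : H ⧸ K.subgroupOf H → G ⧸ K := Quotient.map' (fun h => (h : G)) (fun a b hab => by
      rw [QuotientGroup.leftRel_apply] at hab ⊢
      rw [Subgroup.mem_subgroupOf] at hab
      simpa using hab)
    have hφ : Continuous φ := by
      rw [(QuotientGroup.isQuotientMap_mk _).continuous_iff]
      exact QuotientGroup.continuous_mk.comp continuous_subtype_val
    have hr : Set.range φ = QuotientGroup.mk '' (H : Set G) := by
      ext q
      constructor
      · rintro ⟨c, rfl⟩
        induction c using QuotientGroup.induction_on with | H h =>
        exact ⟨h, h.2, rfl⟩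
      · rintro ⟨g, hg, rfl⟩
        exact ⟨QuotientGroup.mk ⟨g, hg⟩, rfl⟩
    rw [← hr]
    exact isCompact_range hφ
  -- an ultrafilter witnessing proximality
  have hset : {p : (G ⧸ H) × (G ⧸ H) |
      ∃ g : G, p = (QuotientGroup.mk (g * x), QuotientGroup.mk (g * y))}
      = Set.range (fun g : G =>
        ((QuotientGroup.mk (g * x) : G ⧸ H), (QuotientGroup.mk (g * y) : G ⧸ H))) := by
    ext p
    exact ⟨fun ⟨g, hg⟩ => ⟨g, hg.symm⟩, fun ⟨g, hg⟩ => ⟨g, hg.symm⟩⟩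
  rw [hset] at hz
  obtain ⟨𝒰, h𝒰⟩ := ultra_of_mem_closure_range _ _ hz
  have h1 : Filter.Tendsto (fun g : G => (QuotientGroup.mk (g * x) : G ⧸ H)) 𝒰 (𝓝 z) :=
    (continuous_fst.tendsto (z, z)).comp h𝒰
  have h2 : Filter.Tendsto (fun g : G => (QuotientGroup.mk (g * y) : G ⧸ H)) 𝒰 (𝓝 z) :=
    (continuous_snd.tendsto (z, z)).comp h𝒰
  obtain ⟨z₀, rfl⟩ := QuotientGroup.mk_surjective z
  set 𝒢 : Ultrafilter G := 𝒰.map (fun g => z₀⁻¹ * g * x) with h𝒢def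
  have hsmulz : z₀⁻¹ • (QuotientGroup.mk z₀ : G ⧸ H) = QuotientGroup.mk 1 := by
    rw [smul_mk_aux H]
    congr 1
    group
  have hA : Filter.Tendsto (fun g : G => (QuotientGroup.mk g : G ⧸ H)) 𝒢
      (𝓝 (QuotientGroup.mk 1)) := by
    rw [h𝒢def, Ultrafilter.coe_map, Filter.tendsto_map'_iff]
    have he : (fun g : G => (QuotientGroup.mk (z₀⁻¹ * g * x) : G ⧸ H))
        = fun g : G => z₀⁻¹ • (QuotientGroup.mk (g * x) : G ⧸ H) := by
      funext g
      rw [smul_mk_aux H]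
      congr 1
      group
    have h3 : Filter.Tendsto (fun g : G => z₀⁻¹ • (QuotientGroup.mk (g * x) : G ⧸ H)) 𝒰
        (𝓝 (z₀⁻¹ • QuotientGroup.mk z₀)) := h1.const_smul z₀⁻¹
    rw [hsmulz] at h3
    exact h3.congr fun g => (congrFun he g).symm
  have hB : Filter.Tendsto (fun g : G => (QuotientGroup.mk (g * w) : G ⧸ H)) 𝒢
      (𝓝 (QuotientGroup.mk 1)) := by
    rw [h𝒢def, Ultrafilter.coe_map, Filter.tendsto_map'_iff]
    have he : (fun g : G => (QuotientGroup.mk (z₀⁻¹ * g * x * w) : G ⧸ H))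
        = fun g : G => z₀⁻¹ • (QuotientGroup.mk (g * y) : G ⧸ H) := by
      funext g
      rw [smul_mk_aux H]
      congr 1
      rw [hwdef]
      group
    have h3 : Filter.Tendsto (fun g : G => z₀⁻¹ • (QuotientGroup.mk (g * y) : G ⧸ H)) 𝒰
        (𝓝 (z₀⁻¹ • QuotientGroup.mk z₀)) := h2.const_smul z₀⁻¹
    rw [hsmulz] at h3
    exact h3.congr fun g => (congrFun he g).symm
  obtain ⟨a, haH, L1⟩ := keylim U hUo hUc K H hKH hT2P hYcomp 𝒢 (fun g => g) hA
  obtain ⟨b, hbH, L2⟩ := keylim U hUo hUc K H hKH hT2P hYcomp 𝒢 (fun g => g * w) hB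
  set m : G := a⁻¹ * b with hmdef
  have hmH : m ∈ H := mul_mem (inv_mem haH) hbH
  -- `mk m` lies in the closure of the `K`-orbit of `mk w` in `G ⧸ K`
  have hclos : (QuotientGroup.mk m : G ⧸ K) ∈
      closure (Set.range fun k : ↥K => (QuotientGroup.mk ((k : G) * w) : G ⧸ K)) := by
    rw [mem_closure_iff]
    intro O hOo hOm
    have hsm : Filter.Tendsto (fun p : G × (G ⧸ K) => p.1 • p.2)
        (𝓝 ((1 : G), (QuotientGroup.mk m : G ⧸ K))) (𝓝 (QuotientGroup.mk m)) := by
      have h :=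
        (continuous_smul : Continuous fun p : G × (G ⧸ K) => p.1 • p.2).tendsto
          ((1 : G), (QuotientGroup.mk m : G ⧸ K))
      simpa using h
    have hpre := Filter.mem_map.mp (hsm (hOo.mem_nhds hOm))
    rw [nhds_prod_eq] at hpre
    obtain ⟨N, hN, O', hO', hsub⟩ := Filter.mem_prod_iff.mp hpre
    have hNinv : (fun n : G => n⁻¹) ⁻¹' N ∈ 𝓝 (1 : G) := by
      have h := continuous_inv.tendsto (1 : G)
      rw [inv_one] at h
      exact Filter.mem_map.mp (h hN)
    obtain ⟨V, hVsub, hVo, hV1⟩ := mem_nhds_iff.mp hNinv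
    have hev1 : ∀ᶠ g in (𝒢 : Filter G), a⁻¹ * g ∈ V * (K : Set G) := by
      have hVK : IsOpen (QuotientGroup.mk '' (V * (K : Set G)) : Set (G ⧸ K)) :=
        QuotientGroup.isOpenMap_coe _ (hVo.mul_right)
      have hmem1 : (QuotientGroup.mk 1 : G ⧸ K) ∈ QuotientGroup.mk '' (V * (K : Set G)) :=
        ⟨1, ⟨1, hV1, 1, K.one_mem, mul_one 1⟩, rfl⟩
      have hL : Filter.Tendsto (fun g : G => (QuotientGroup.mk (a⁻¹ * g) : G ⧸ K)) 𝒢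
          (𝓝 (QuotientGroup.mk 1)) := by
        have h3 := L1.const_smul a⁻¹
        have h4 : a⁻¹ • (QuotientGroup.mk a : G ⧸ K) = QuotientGroup.mk 1 := by
          rw [smul_mk_aux K]
          congr 1
          group
        rw [h4] at h3
        exact h3.congr fun g => (smul_mk_aux K a⁻¹ g)
      have h5 := Filter.mem_map.mp (hL (hVK.mem_nhds hmem1))
      filter_upwards [h5] with g hg
      exact mem_of_mk_mem_mul_image K V hg
    have hev2 : ∀ᶠ g in (𝒢 : Filter G), a⁻¹ • (QuotientGroup.mk (g * w) : G ⧸ K) ∈ O' := by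
      have h3 := L2.const_smul a⁻¹
      have h4 : a⁻¹ • (QuotientGroup.mk b : G ⧸ K) = QuotientGroup.mk m := by
        rw [smul_mk_aux K, hmdef]
      rw [h4] at h3
      exact Filter.mem_map.mp (h3 hO')
    obtain ⟨g, hg1, hg2⟩ := (hev1.and hev2).exists
    obtain ⟨v, hv, k, hkK, hvk⟩ := hg1
    refine ⟨QuotientGroup.mk (k * w), ?_, ⟨⟨k, hkK⟩, rfl⟩⟩
    have hkval : k = v⁻¹ * (a⁻¹ * g) := by
      rw [← hvk]
      group
    have heq : (QuotientGroup.mk (k * w) : G ⧸ K)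
        = v⁻¹ • (a⁻¹ • (QuotientGroup.mk (g * w) : G ⧸ K)) := by
      rw [smul_mk_aux K, smul_mk_aux K, hkval]
      congr 1
      group
    rw [heq]
    exact hsub (Set.mk_mem_prod (hVsub hv) hg2)
  obtain ⟨ℳ, hℳ⟩ := ultra_of_mem_closure_range
    (fun k : ↥K => (QuotientGroup.mk ((k : G) * w) : G ⧸ K)) _ hclos
  -- the Ellis-type semigroup
  set Yc : Set (G ⧸ K) := QuotientGroup.mk '' (H : Set G) with hYcdef
  haveI hYcspace : CompactSpace ↥Yc := isCompact_iff_compactSpace.mp hYcomp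
  have hsmulY : ∀ h : G, h ∈ H → ∀ q : G ⧸ K, q ∈ Yc → h • q ∈ Yc := by
    rintro h hh q ⟨g, hg, rfl⟩
    exact ⟨h * g, mul_mem hh hg, (smul_mk_aux K h g).symm⟩
  let Φ : ↥K → (↥Yc → ↥Yc) := fun k => fun yy =>
    ⟨(k : G) • (yy : G ⧸ K), hsmulY _ (hKH k.2) _ yy.2⟩
  letI instMulM : Mul ((↥Yc → ↥Yc) × (G ⧸ K)) :=
    ⟨fun t t' => ⟨t.1 ∘ t'.1,
      if h : t'.2 ∈ Yc then ((t.1 ⟨t'.2, h⟩ : ↥Yc) : G ⧸ K) else t'.2⟩⟩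
  letI instSemigroupM : Semigroup ((↥Yc → ↥Yc) × (G ⧸ K)) := by
    refine ⟨fun t₁ t₂ t₃ => Prod.ext rfl ?_⟩
    show (if h : t₃.2 ∈ Yc then (((t₁ * t₂).1 ⟨t₃.2, h⟩ : ↥Yc) : G ⧸ K) else t₃.2)
      = (if h : (t₂ * t₃).2 ∈ Yc then ((t₁.1 ⟨(t₂ * t₃).2, h⟩ : ↥Yc) : G ⧸ K) else (t₂ * t₃).2)
    by_cases h3 : t₃.2 ∈ Yc
    · have he2 : (t₂ * t₃).2 = ((t₂.1 ⟨t₃.2, h3⟩ : ↥Yc) : G ⧸ K) := dif_pos h3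
      have hP : (t₂ * t₃).2 ∈ Yc := he2 ▸ (t₂.1 ⟨t₃.2, h3⟩).2
      rw [dif_pos h3, dif_pos hP]
      have hsub : (⟨(t₂ * t₃).2, hP⟩ : ↥Yc) = t₂.1 ⟨t₃.2, h3⟩ := Subtype.ext he2
      rw [hsub]
      rfl
    · have he2 : (t₂ * t₃).2 = t₃.2 := dif_neg h3
      have hP : (t₂ * t₃).2 ∉ Yc := by rw [he2]; exact h3
      rw [dif_neg h3, dif_neg hP, he2]
  have hcontmul : ∀ r : (↥Yc → ↥Yc) × (G ⧸ K), Continuous (· * r) := by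
    intro r
    show Continuous fun t : (↥Yc → ↥Yc) × (G ⧸ K) =>
      ((t.1 ∘ r.1, if h : r.2 ∈ Yc then ((t.1 ⟨r.2, h⟩ : ↥Yc) : G ⧸ K) else r.2) :
        (↥Yc → ↥Yc) × (G ⧸ K))
    refine Continuous.prodMk ?_ ?_
    · exact continuous_pi fun yy => (continuous_apply (r.1 yy)).comp continuous_fst
    · by_cases hr : r.2 ∈ Yc
      · simp only [dif_pos hr]
        exact continuous_subtype_val.comp ((continuous_apply _).comp continuous_fst)
      · simp only [dif_neg hr]
        exact continuous_const
  set ξ : ↥K → (↥Yc → ↥Yc) × (G ⧸ K) :=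
    fun k => (Φ k, (k : G) • (QuotientGroup.mk w : G ⧸ K)) with hξdef
  set T : Set ((↥Yc → ↥Yc) × (G ⧸ K)) :=
    closure (Set.range ξ) ∩ {t | t.2 ∈ Yc} with hTdef
  have hYclosed : IsClosed Yc := hYcomp.isClosed
  have hTclosed : IsClosed T :=
    IsClosed.inter isClosed_closure (hYclosed.preimage continuous_snd)
  have hTcomp : IsCompact T := by
    have hbig : IsCompact ((Set.univ : Set (↥Yc → ↥Yc)) ×ˢ Yc) :=
      isCompact_univ.prod hYcomp
    exact hbig.of_isClosed_subset hTclosed fun t ht => Set.mk_mem_prod trivial ht.2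
  -- extraction of ultrafilter witnesses
  have hW1 : ∀ t : (↥Yc → ↥Yc) × (G ⧸ K), t ∈ closure (Set.range ξ) →
      ∃ 𝒜 : Ultrafilter ↥K,
        (∀ yy : ↥Yc, Filter.Tendsto (fun k : ↥K => (k : G) • (yy : G ⧸ K)) 𝒜
          (𝓝 ((t.1 yy : ↥Yc) : G ⧸ K)))
        ∧ Filter.Tendsto (fun k : ↥K => (k : G) • (QuotientGroup.mk w : G ⧸ K)) 𝒜 (𝓝 t.2) := by
    intro t ht
    obtain ⟨𝒜, h𝒜⟩ := ultra_of_mem_closure_range ξ t ht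
    have hfst : Filter.Tendsto (fun k => (ξ k).1) 𝒜 (𝓝 t.1) :=
      (continuous_fst.tendsto t).comp h𝒜
    have hsnd : Filter.Tendsto (fun k => (ξ k).2) 𝒜 (𝓝 t.2) :=
      (continuous_snd.tendsto t).comp h𝒜
    refine ⟨𝒜, fun yy => ?_, hsnd⟩
    have h3 : Filter.Tendsto (fun k => (ξ k).1 yy) 𝒜 (𝓝 (t.1 yy)) :=
      (tendsto_pi_nhds.mp hfst) yy
    exact (continuous_subtype_val.tendsto _).comp h3
  have hW2 : ∀ (t : (↥Yc → ↥Yc) × (G ⧸ K)) (ℱ : Filter ↥K), ℱ.NeBot →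
      (∀ yy : ↥Yc, Filter.Tendsto (fun k : ↥K => (k : G) • (yy : G ⧸ K)) ℱ
        (𝓝 ((t.1 yy : ↥Yc) : G ⧸ K))) →
      Filter.Tendsto (fun k : ↥K => (k : G) • (QuotientGroup.mk w : G ⧸ K)) ℱ (𝓝 t.2) →
      t ∈ closure (Set.range ξ) := by
    intro t ℱ hne hpt hw2
    haveI := hne
    have hfst : Filter.Tendsto (fun k => (ξ k).1) ℱ (𝓝 t.1) := by
      rw [tendsto_pi_nhds]
      intro yy
      rw [Topology.IsEmbedding.subtypeVal.tendsto_nhds_iff]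
      exact hpt yy
    have hξt : Filter.Tendsto ξ ℱ (𝓝 t) := by
      have h3 := hfst.prodMk_nhds hw2
      exact h3
    exact mem_closure_of_tendsto hξt (Filter.Eventually.of_forall fun k => Set.mem_range_self k)
  -- `T` is nonempty
  obtain ⟨r₀, -, hr₀le⟩ :=
    (isCompact_univ : IsCompact (Set.univ : Set (↥Yc → ↥Yc))).ultrafilter_le_nhds (ℳ.map Φ)
      (by rw [Filter.le_principal_iff]; exact Filter.univ_mem)
  rw [Ultrafilter.coe_map, ← Filter.tendsto_id', Filter.tendsto_map'_iff] at hr₀le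
  have hmY : (QuotientGroup.mk m : G ⧸ K) ∈ Yc := ⟨m, hmH, rfl⟩
  have ht₀ : ((r₀, (QuotientGroup.mk m : G ⧸ K)) : (↥Yc → ↥Yc) × (G ⧸ K)) ∈ T := by
    refine ⟨hW2 _ ℳ inferInstance ?_ ?_, hmY⟩
    · intro yy
      have h3 : Filter.Tendsto (fun k => Φ k yy) ℳ (𝓝 (r₀ yy)) := (tendsto_pi_nhds.mp hr₀le) yy
      exact (continuous_subtype_val.tendsto _).comp h3
    · have he : (fun k : ↥K => (k : G) • (QuotientGroup.mk w : G ⧸ K))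
          = fun k : ↥K => (QuotientGroup.mk ((k : G) * w) : G ⧸ K) :=
        funext fun k => smul_mk_aux K _ w
      rw [he]
      exact hℳ
  -- `T` is closed under multiplication
  have hmul_mem : ∀ t ∈ T, ∀ t' ∈ T, t * t' ∈ T := by
    rintro t ⟨htJ, htY⟩ t' ⟨ht'J, ht'Y⟩
    obtain ⟨𝒜, h𝒜pt, h𝒜w⟩ := hW1 t htJ
    obtain ⟨ℬ, hℬpt, hℬw⟩ := hW1 t' ht'J
    have hsnd : (t * t').2 = ((t.1 ⟨t'.2, ht'Y⟩ : ↥Yc) : G ⧸ K) := dif_pos ht'Y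
    have hfst : (t * t').1 = t.1 ∘ t'.1 := rfl
    set 𝒞 : Filter ↥K :=
      (𝒜 : Filter ↥K).bind (fun i => Filter.map (fun j => i * j) (ℬ : Filter ↥K)) with h𝒞def
    have h𝒞ne : 𝒞.NeBot := bind_neBot_aux _ _ fun i => Filter.map_neBot
    constructor
    · refine hW2 _ 𝒞 h𝒞ne ?_ ?_
      · intro yy
        rw [hfst]
        refine tendsto_bind_aux _ _ _ (fun i : ↥K => (i : G) • ((t'.1 yy : ↥Yc) : G ⧸ K)) _
          ?_ (h𝒜pt (t'.1 yy))
        intro i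
        have h5 := (hℬpt yy).const_smul (i : G)
        refine h5.congr fun j => ?_
        show (i : G) • ((j : G) • (yy : G ⧸ K)) = ((i * j : ↥K) : G) • (yy : G ⧸ K)
        rw [Subgroup.coe_mul, mul_smul]
      · rw [hsnd]
        have h6 := h𝒜pt ⟨t'.2, ht'Y⟩
        refine tendsto_bind_aux _ _ _ (fun i : ↥K => (i : G) • t'.2) _ ?_ h6
        intro i
        have h5 := hℬw.const_smul (i : G)
        refine h5.congr fun j => ?_
        show (i : G) • ((j : G) • (QuotientGroup.mk w : G ⧸ K)) = ((i * j : ↥K) : G) • (QuotientGroup.mk w : G ⧸ K)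
        rw [Subgroup.coe_mul, mul_smul]
    · rw [Set.mem_setOf_eq, hsnd]
      exact (t.1 ⟨t'.2, ht'Y⟩).2
  -- an idempotent in `T`
  obtain ⟨t, htT, hidem⟩ :=
    exists_idempotent_in_compact_subsemigroup hcontmul T ⟨_, ht₀⟩ hTcomp hmul_mem
  obtain ⟨𝒜, h𝒜pt, h𝒜w⟩ := hW1 t htT.1
  have htY : t.2 ∈ Yc := htT.2
  have hidem1 : t.1 ∘ t.1 = t.1 := congrArg Prod.fst hidem
  -- the idempotent acts as the identity on `Yc`
  have hr : ∀ yy : ↥Yc, t.1 yy = yy := by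
    intro yy
    by_contra hne
    obtain ⟨ℓ₁, hℓ₁, hmk₁⟩ := yy.2
    obtain ⟨ℓ₂, hℓ₂, hmk₂⟩ := (t.1 yy).2
    have hne' : (QuotientGroup.mk ℓ₁ : G ⧸ K) ≠ QuotientGroup.mk ℓ₂ := by
      intro he
      exact hne (Subtype.ext (by rw [← hmk₁, ← hmk₂, he])).symm
    have hT1 : Filter.Tendsto (fun k : ↥K => (QuotientGroup.mk ((k : G) * ℓ₁) : G ⧸ K)) 𝒜
        (𝓝 ((t.1 yy : ↥Yc) : G ⧸ K)) := by
      refine (h𝒜pt yy).congr fun k => ?_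
      rw [← hmk₁, smul_mk_aux K]
    have hT2 : Filter.Tendsto (fun k : ↥K => (QuotientGroup.mk ((k : G) * ℓ₂) : G ⧸ K)) 𝒜
        (𝓝 ((t.1 yy : ↥Yc) : G ⧸ K)) := by
      have h6 := h𝒜pt (t.1 yy)
      have h7 : t.1 (t.1 yy) = t.1 yy := congrFun hidem1 yy
      rw [h7] at h6
      refine h6.congr fun k => ?_
      rw [← hmk₂, smul_mk_aux K]
    exact absurd (dist_aux K hKd hne' (𝒜 : Filter ↥K) (fun k => (k : G)) _ hT1 hT2) id
  -- final contradiction using the pair `(w, ℓ)`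
  obtain ⟨ℓ, hℓH, hmkℓ⟩ := htY
  have hneq : (QuotientGroup.mk w : G ⧸ K) ≠ QuotientGroup.mk ℓ := by
    intro he
    apply hw
    have h8 : w⁻¹ * ℓ ∈ H := hKH (QuotientGroup.eq.mp he)
    have h9 : ℓ * (w⁻¹ * ℓ)⁻¹ ∈ H := mul_mem hℓH (inv_mem h8)
    have h10 : ℓ * (w⁻¹ * ℓ)⁻¹ = w := by group
    rwa [h10] at h9
  have hTw : Filter.Tendsto (fun k : ↥K => (QuotientGroup.mk ((k : G) * w) : G ⧸ K)) 𝒜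
      (𝓝 t.2) := h𝒜w.congr fun k => smul_mk_aux K _ w
  have hTl : Filter.Tendsto (fun k : ↥K => (QuotientGroup.mk ((k : G) * ℓ) : G ⧸ K)) 𝒜
      (𝓝 t.2) := by
    have h9 := h𝒜pt ⟨t.2, htT.2⟩
    rw [hr ⟨t.2, htT.2⟩] at h9
    refine h9.congr fun k => ?_
    show (k : G) • ((⟨t.2, htT.2⟩ : ↥Yc) : G ⧸ K) = _
    rw [show ((⟨t.2, htT.2⟩ : ↥Yc) : G ⧸ K) = QuotientGroup.mk ℓ from hmkℓ.symm, smul_mk_aux K]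
  exact dist_aux K hKd hneq (𝒜 : Filter ↥K) (fun k => (k : G)) t.2 hTw hTl
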